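/- Let s ∈ [0,1), C, R > 0, and suppose |a_k| ≤ C (k!)^s / R^k for all k. Then for every m ≥ 0 and x ∈ [−L, L], the m-th derivative of f(x) = Σ_{k≥0} a_k x^k/k! satisfies |f^(m)(x)| ≤ C · (2^s/R)^m · (m!)^s · Σ_{k≥0} (2^s L / R)^k / (k!)^(1−s). -/

import Mathlib

open Real Set

private lemma fact_two_pow (k m : ℕ) :
    ((k + m).factorial : ℝ) ≤ 2 ^ (k + m) * ((k.factorial : ℝ) * (m.factorial : ℝ)) := by
  have h1 : (k + m).choose m ≤ 2 ^ (k + m) := by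
    calc (k + m).choose m ≤ ∑ i ∈ Finset.range (k + m + 1), (k + m).choose i :=
          Finset.single_le_sum (fun i _ => Nat.zero_le _)
            (Finset.mem_range.mpr (by omega))
      _ = 2 ^ (k + m) := Nat.sum_range_choose _
  have h2 : (k + m).factorial = (k + m).choose m * k.factorial * m.factorial :=
    (Nat.add_choose_mul_factorial_mul_factorial k m).symm
  have : (k + m).factorial ≤ 2 ^ (k + m) * (k.factorial * m.factorial) := by
    rw [h2]
    calc (k + m).choose m * k.factorial * m.factorial
        ≤ 2 ^ (k + m) * k.factorial * m.factorial :=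
          Nat.mul_le_mul_right _ (Nat.mul_le_mul_right _ h1)
      _ = 2 ^ (k + m) * (k.factorial * m.factorial) := by ring
  exact_mod_cast this

private lemma summ_aux {s : ℝ} (hs1 : s < 1) {x : ℝ} (hx : 0 ≤ x) :
    Summable (fun k : ℕ => x ^ k / (k.factorial : ℝ) ^ (1 - s)) := by
  have h1s : 0 < 1 - s := by linarith
  apply summable_of_ratio_norm_eventually_le (r := 1 / 2) (by norm_num)
  have htend : Filter.Tendsto (fun n : ℕ => ((n : ℝ) + 1) ^ (1 - s)) Filter.atTop Filter.atTop :=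
    (tendsto_rpow_atTop h1s).comp (Filter.tendsto_atTop_add_const_right _ 1
      tendsto_natCast_atTop_atTop)
  filter_upwards [htend.eventually_ge_atTop (2 * x)] with n hn
  have hfpos : (0 : ℝ) < (n.factorial : ℝ) := by exact_mod_cast n.factorial_pos
  have hnp : (0 : ℝ) < ((n : ℝ) + 1) ^ (1 - s) := rpow_pos_of_pos (by positivity) _
  have hfact : ((n + 1).factorial : ℝ) ^ (1 - s)
      = ((n : ℝ) + 1) ^ (1 - s) * (n.factorial : ℝ) ^ (1 - s) := by
    rw [Nat.factorial_succ, Nat.cast_mul, mul_rpow (by positivity) (by positivity)]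
    push_cast
    ring_nf
  have key : x ^ (n + 1) / ((n + 1).factorial : ℝ) ^ (1 - s)
      ≤ 1 / 2 * (x ^ n / (n.factorial : ℝ) ^ (1 - s)) := by
    rw [hfact, pow_succ]
    rw [div_le_iff₀ (by positivity)]
    have hxle : x ≤ ((n : ℝ) + 1) ^ (1 - s) / 2 := by linarith
    calc x ^ n * x ≤ x ^ n * (((n : ℝ) + 1) ^ (1 - s) / 2) :=
          mul_le_mul_of_nonneg_left hxle (by positivity)
      _ = 1 / 2 * (x ^ n / (n.factorial : ℝ) ^ (1 - s))
            * (((n : ℝ) + 1) ^ (1 - s) * (n.factorial : ℝ) ^ (1 - s)) := by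
          field_simp
  have h1 : ‖x ^ (n + 1) / ((n + 1).factorial : ℝ) ^ (1 - s)‖
      = x ^ (n + 1) / ((n + 1).factorial : ℝ) ^ (1 - s) := by
    rw [Real.norm_eq_abs, abs_of_nonneg (by positivity)]
  have h2 : ‖x ^ n / (n.factorial : ℝ) ^ (1 - s)‖
      = x ^ n / (n.factorial : ℝ) ^ (1 - s) := by
    rw [Real.norm_eq_abs, abs_of_nonneg (by positivity)]
  rw [h1, h2]
  exact key

/-- The key algebraic identity used repeatedly. -/
private lemma calc_eq {s : ℝ} (n : ℕ) (c ρ r : ℝ) (hρ : 0 < ρ) :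
    c * ((n.factorial : ℝ)) ^ s / ρ ^ n * r ^ n / (n.factorial : ℝ)
      = c * ((r / ρ) ^ n / ((n.factorial : ℝ)) ^ (1 - s)) := by
  have hF : (0 : ℝ) < (n.factorial : ℝ) := by exact_mod_cast n.factorial_pos
  have hFs : (0 : ℝ) < ((n.factorial : ℝ)) ^ s := rpow_pos_of_pos hF _
  have hF1s : (0 : ℝ) < ((n.factorial : ℝ)) ^ (1 - s) := rpow_pos_of_pos hF _
  have hsplit : ((n.factorial : ℝ)) ^ s * ((n.factorial : ℝ)) ^ (1 - s) = (n.factorial : ℝ) := by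
    rw [← Real.rpow_add hF]
    norm_num
  rw [div_pow]
  field_simp
  linear_combination (c * r ^ n) * hsplit

private lemma gevrey_shift {s C R : ℝ} (hs0 : 0 ≤ s) (hC : 0 < C) (hR : 0 < R)
    {a : ℕ → ℂ} (ha : ∀ k : ℕ, ‖a k‖ ≤ C * (k.factorial : ℝ) ^ s / R ^ k) (m k : ℕ) :
    ‖a (k + m)‖ ≤ (C * ((2 : ℝ) ^ s / R) ^ m * (m.factorial : ℝ) ^ s)
      * (k.factorial : ℝ) ^ s / (R / (2 : ℝ) ^ s) ^ k := by
  have h2s : (0 : ℝ) < (2 : ℝ) ^ s := rpow_pos_of_pos two_pos s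
  have hkf : (0 : ℝ) < (k.factorial : ℝ) := by exact_mod_cast k.factorial_pos
  have hmf : (0 : ℝ) < (m.factorial : ℝ) := by exact_mod_cast m.factorial_pos
  have hpow : ((2 : ℝ) ^ (k + m)) ^ s = ((2 : ℝ) ^ s) ^ (k + m) := by
    rw [← Real.rpow_natCast (2 : ℝ) (k + m), ← Real.rpow_natCast ((2 : ℝ) ^ s) (k + m),
      ← Real.rpow_mul (by norm_num), ← Real.rpow_mul (by norm_num), mul_comm]
  have hfs : (((k + m).factorial : ℝ)) ^ s
      ≤ ((2 : ℝ) ^ s) ^ k * ((2 : ℝ) ^ s) ^ m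
        * ((k.factorial : ℝ) ^ s * (m.factorial : ℝ) ^ s) := by
    calc (((k + m).factorial : ℝ)) ^ s
        ≤ ((2 : ℝ) ^ (k + m) * ((k.factorial : ℝ) * (m.factorial : ℝ))) ^ s :=
          Real.rpow_le_rpow (by positivity) (fact_two_pow k m) hs0
      _ = ((2 : ℝ) ^ (k + m)) ^ s * ((k.factorial : ℝ) ^ s * (m.factorial : ℝ) ^ s) := by
          rw [Real.mul_rpow (by positivity) (by positivity),
            Real.mul_rpow (by positivity) (by positivity)]
      _ = _ := by rw [hpow, pow_add]
  calc ‖a (k + m)‖ ≤ C * ((k + m).factorial : ℝ) ^ s / R ^ (k + m) := ha (k + m)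
    _ ≤ C * (((2 : ℝ) ^ s) ^ k * ((2 : ℝ) ^ s) ^ m
          * ((k.factorial : ℝ) ^ s * (m.factorial : ℝ) ^ s)) / R ^ (k + m) := by
        gcongr
    _ = (C * ((2 : ℝ) ^ s / R) ^ m * (m.factorial : ℝ) ^ s)
          * (k.factorial : ℝ) ^ s / (R / (2 : ℝ) ^ s) ^ k := by
        rw [div_pow, div_pow, pow_add]
        field_simp

private lemma gevrey_hasDerivAt {s C R : ℝ} (hs0 : 0 ≤ s) (hs1 : s < 1)
    (hC : 0 < C) (hR : 0 < R)
    {b : ℕ → ℂ} (hb : ∀ k : ℕ, ‖b k‖ ≤ C * (k.factorial : ℝ) ^ s / R ^ k) (x : ℝ) :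
    HasDerivAt (fun y : ℝ => ∑' k : ℕ, b k * (y : ℂ) ^ k / (k.factorial : ℂ))
      (∑' k : ℕ, b (k + 1) * (x : ℂ) ^ k / (k.factorial : ℂ)) x := by
  have h2s : (0 : ℝ) < (2 : ℝ) ^ s := rpow_pos_of_pos two_pos s
  have hR1pos : (0 : ℝ) < R / (2 : ℝ) ^ s := by positivity
  set r : ℝ := |x| + 1 with hr
  have hrpos : 0 < r := by positivity
  have hxt : x ∈ Ioo (-r) r := by
    constructor
    · have h := neg_abs_le x; rw [hr]; linarith
    · have h := le_abs_self x; rw [hr]; linarith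
  have hshift : ∀ k : ℕ, ‖b (k + 1)‖
      ≤ (C * ((2 : ℝ) ^ s / R)) * (k.factorial : ℝ) ^ s / (R / (2 : ℝ) ^ s) ^ k := by
    intro k
    have h := gevrey_shift hs0 hC hR hb 1 k
    simpa [Nat.factorial_one, Real.one_rpow] using h
  have husum1 : Summable (fun n : ℕ => ‖b (n + 1)‖ * r ^ n / (n.factorial : ℝ)) := by
    apply Summable.of_nonneg_of_le (fun n => by positivity)
      (f := fun n => (C * ((2 : ℝ) ^ s / R))
        * ((r / (R / (2 : ℝ) ^ s)) ^ n / (n.factorial : ℝ) ^ (1 - s)))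
    · intro n
      have hfn : (0 : ℝ) < (n.factorial : ℝ) := by exact_mod_cast n.factorial_pos
      rw [← calc_eq n _ _ r hR1pos]
      gcongr <;> first
        | exact norm_nonneg _
        | exact hshift n
        | positivity
    · exact (summ_aux hs1 (by positivity : (0:ℝ) ≤ r / (R / (2 : ℝ) ^ s))).mul_left _
  have husum : Summable (fun n : ℕ => ‖b n‖ * ((n : ℝ) * r ^ (n - 1)) / (n.factorial : ℝ)) := by
    apply (summable_nat_add_iff 1).mp
    apply husum1.congr
    intro n
    have hfn : (0 : ℝ) < (n.factorial : ℝ) := by exact_mod_cast n.factorial_pos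
    have h1 : ((n : ℝ) + 1) ≠ 0 := by positivity
    simp only [Nat.add_sub_cancel, Nat.factorial_succ, Nat.cast_mul]
    push_cast
    field_simp
  have hgderiv : ∀ n : ℕ, ∀ y : ℝ, y ∈ Ioo (-r) r →
      HasDerivAt (fun y : ℝ => b n * (y : ℂ) ^ n / (n.factorial : ℂ))
        (b n * ((n : ℂ) * (y : ℂ) ^ (n - 1)) / (n.factorial : ℂ)) y := by
    intro n y _
    have h2 : HasDerivAt (fun y : ℝ => ((y : ℂ)) ^ n) ((n : ℂ) * (y : ℂ) ^ (n - 1)) y :=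
      (hasDerivAt_pow n ((y : ℂ))).comp_ofReal
    exact (h2.const_mul (b n)).div_const ((n.factorial : ℂ))
  have hgbound : ∀ n : ℕ, ∀ y : ℝ, y ∈ Ioo (-r) r →
      ‖b n * ((n : ℂ) * (y : ℂ) ^ (n - 1)) / (n.factorial : ℂ)‖
        ≤ ‖b n‖ * ((n : ℝ) * r ^ (n - 1)) / (n.factorial : ℝ) := by
    intro n y hy
    have hyr : |y| ≤ r := by
      rw [abs_le]; exact ⟨le_of_lt hy.1, le_of_lt hy.2⟩
    have hn : ‖b n * ((n : ℂ) * (y : ℂ) ^ (n - 1)) / (n.factorial : ℂ)‖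
        = ‖b n‖ * ((n : ℝ) * |y| ^ (n - 1)) / (n.factorial : ℝ) := by
      simp only [norm_div, norm_mul, Complex.norm_natCast, norm_pow,
        Complex.norm_real, Real.norm_eq_abs]
    rw [hn]
    gcongr <;> first
      | exact norm_nonneg _
      | exact abs_nonneg y
      | exact hyr
      | positivity
  have hg0 : Summable fun n => b n * (x : ℂ) ^ n / (n.factorial : ℂ) := by
    apply Summable.of_norm
    apply Summable.of_nonneg_of_le (fun n => norm_nonneg _)
      (f := fun n => C * ((r / R) ^ n / (n.factorial : ℝ) ^ (1 - s)))
    · intro n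
      have hfn : (0 : ℝ) < (n.factorial : ℝ) := by exact_mod_cast n.factorial_pos
      have hxr : |x| ≤ r := by rw [hr]; linarith
      have h1 : ‖b n * (x : ℂ) ^ n / (n.factorial : ℂ)‖
          = ‖b n‖ * |x| ^ n / (n.factorial : ℝ) := by
        simp only [norm_div, norm_mul, norm_pow, Complex.norm_real,
          Complex.norm_natCast, Real.norm_eq_abs]
      rw [h1, ← calc_eq n C R r hR]
      gcongr <;> first
        | exact norm_nonneg _
        | exact hb n
        | exact abs_nonneg x
        | exact hxr
        | positivity
    · exact (summ_aux hs1 (by positivity : (0:ℝ) ≤ r / R)).mul_left C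
  have main := hasDerivAt_tsum_of_isPreconnected husum isOpen_Ioo isPreconnected_Ioo
    hgderiv hgbound hxt hg0 hxt
  have hsum' : Summable fun n => b n * ((n : ℂ) * (x : ℂ) ^ (n - 1)) / (n.factorial : ℂ) := by
    apply Summable.of_norm
    exact Summable.of_nonneg_of_le (fun n => norm_nonneg _) (fun n => hgbound n x hxt) husum
  have heq : (∑' n : ℕ, b n * ((n : ℂ) * (x : ℂ) ^ (n - 1)) / (n.factorial : ℂ))
      = ∑' k : ℕ, b (k + 1) * (x : ℂ) ^ k / (k.factorial : ℂ) := by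
    rw [Summable.tsum_eq_zero_add hsum']
    have h0 : b 0 * ((0 : ℕ) * (x : ℂ) ^ (0 - 1)) / ((0 : ℕ).factorial : ℂ) = 0 := by simp
    rw [h0, zero_add]
    apply tsum_congr
    intro k
    have hkf : ((k.factorial : ℂ)) ≠ 0 := by exact_mod_cast k.factorial_ne_zero
    have hk1' : ((k : ℂ) + 1) ≠ 0 := by
      intro h
      have h2 : ((k + 1 : ℕ) : ℂ) = 0 := by push_cast; linear_combination h
      exact_mod_cast h2
    simp only [Nat.add_sub_cancel, Nat.factorial_succ, Nat.cast_mul]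
    push_cast
    field_simp
  rw [← heq]
  exact main

theorem gevrey_derivative_estimate (s C R L : ℝ) (hs0 : 0 ≤ s) (hs1 : s < 1)
    (hC : 0 < C) (hR : 0 < R) (hL : 0 < L) (a : ℕ → ℂ)
    (ha : ∀ k : ℕ, ‖a k‖ ≤ C * (Nat.factorial k : ℝ) ^ s / R ^ k) :
    ∀ (m : ℕ) (x : ℝ), x ∈ Icc (-L) L →
      ‖iteratedDeriv m
          (fun x : ℝ => ∑' k : ℕ, a k * (x : ℂ) ^ k / (Nat.factorial k : ℂ)) x‖
        ≤ C * ((2 : ℝ) ^ s / R) ^ m * (Nat.factorial m : ℝ) ^ s *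
            ∑' k : ℕ, ((2 : ℝ) ^ s * L / R) ^ k / (Nat.factorial k : ℝ) ^ (1 - s) := by
  have h2s : (0 : ℝ) < (2 : ℝ) ^ s := rpow_pos_of_pos two_pos s
  have key : ∀ (m : ℕ) (x : ℝ),
      iteratedDeriv m (fun x : ℝ => ∑' k : ℕ, a k * (x : ℂ) ^ k / (Nat.factorial k : ℂ)) x
        = ∑' k : ℕ, a (k + m) * (x : ℂ) ^ k / (k.factorial : ℂ) := by
    intro m
    induction m with
    | zero => intro x; simp [iteratedDeriv_zero]
    | succ m ih =>
      intro x
      rw [iteratedDeriv_succ]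
      have hfun : iteratedDeriv m
          (fun x : ℝ => ∑' k : ℕ, a k * (x : ℂ) ^ k / (Nat.factorial k : ℂ))
          = fun y : ℝ => ∑' k : ℕ, a (k + m) * (y : ℂ) ^ k / (k.factorial : ℂ) :=
        funext ih
      rw [hfun]
      have hCmpos : (0:ℝ) < C * ((2 : ℝ) ^ s / R) ^ m * ((m.factorial : ℝ)) ^ s := by
        have : (0:ℝ) < ((m.factorial : ℝ)) ^ s := by
          have : (0:ℝ) < (m.factorial : ℝ) := by exact_mod_cast m.factorial_pos
          positivity
        positivity
      have hRm : (0 : ℝ) < R / (2 : ℝ) ^ s := by positivity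
      have hbm : ∀ k : ℕ, ‖a (k + m)‖
          ≤ (C * ((2 : ℝ) ^ s / R) ^ m * ((m.factorial : ℝ)) ^ s)
            * (k.factorial : ℝ) ^ s / (R / (2 : ℝ) ^ s) ^ k :=
        fun k => gevrey_shift hs0 hC hR ha m k
      have hd := gevrey_hasDerivAt hs0 hs1 hCmpos hRm hbm x
      rw [hd.deriv]
      apply tsum_congr
      intro k
      have hk : k + 1 + m = k + (m + 1) := by omega
      rw [hk]
  intro m x hx
  rw [key m x]
  have hxL : |x| ≤ L := abs_le.mpr ⟨hx.1, hx.2⟩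
  have hRm : (0 : ℝ) < R / (2 : ℝ) ^ s := by positivity
  have hmf : (0:ℝ) < ((m.factorial : ℝ)) ^ s := by
    have : (0:ℝ) < (m.factorial : ℝ) := by exact_mod_cast m.factorial_pos
    positivity
  have hL2 : L / (R / (2 : ℝ) ^ s) = (2 : ℝ) ^ s * L / R := by
    field_simp
  have hterm : ∀ k : ℕ, ‖a (k + m) * (x : ℂ) ^ k / (k.factorial : ℂ)‖
      ≤ (C * ((2 : ℝ) ^ s / R) ^ m * ((m.factorial : ℝ)) ^ s)
        * (((2 : ℝ) ^ s * L / R) ^ k / (k.factorial : ℝ) ^ (1 - s)) := by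
    intro k
    have hfn : (0 : ℝ) < (k.factorial : ℝ) := by exact_mod_cast k.factorial_pos
    have h1 : ‖a (k + m) * (x : ℂ) ^ k / (k.factorial : ℂ)‖
        = ‖a (k + m)‖ * |x| ^ k / (k.factorial : ℝ) := by
      simp only [norm_div, norm_mul, norm_pow, Complex.norm_real,
        Complex.norm_natCast, Real.norm_eq_abs]
    rw [h1, ← hL2, ← calc_eq k _ _ L hRm]
    gcongr <;> first
      | exact norm_nonneg _
      | exact gevrey_shift hs0 hC hR ha m k
      | exact abs_nonneg x
      | exact hxL
      | positivity
  have hbsum : Summable (fun k : ℕ =>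
      (C * ((2 : ℝ) ^ s / R) ^ m * ((m.factorial : ℝ)) ^ s)
        * (((2 : ℝ) ^ s * L / R) ^ k / (k.factorial : ℝ) ^ (1 - s))) :=
    (summ_aux hs1 (by positivity : (0:ℝ) ≤ (2 : ℝ) ^ s * L / R)).mul_left _
  have hnsum : Summable (fun k : ℕ => ‖a (k + m) * (x : ℂ) ^ k / (k.factorial : ℂ)‖) :=
    Summable.of_nonneg_of_le (fun k => norm_nonneg _) hterm hbsum
  calc ‖∑' k : ℕ, a (k + m) * (x : ℂ) ^ k / (k.factorial : ℂ)‖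
      ≤ ∑' k : ℕ, ‖a (k + m) * (x : ℂ) ^ k / (k.factorial : ℂ)‖ :=
        norm_tsum_le_tsum_norm hnsum
    _ ≤ ∑' k : ℕ, (C * ((2 : ℝ) ^ s / R) ^ m * ((m.factorial : ℝ)) ^ s)
          * (((2 : ℝ) ^ s * L / R) ^ k / (k.factorial : ℝ) ^ (1 - s)) :=
        Summable.tsum_le_tsum hterm hnsum hbsum
    _ = _ := tsum_mul_left
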